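/- For every H ∈ (1/2,1) and every n ≥ 1, the operator K̇_H is a bounded linear operator on L²([0,1];ℝⁿ): there exists a constant C > 0 such that for every f ∈ L²([0,1];ℝⁿ), the function t ↦ c_H t^{H−1/2} ∫_0^t (t−s)^{H−3/2} s^{1/2−H} f(s) ds belongs to L²([0,1];ℝⁿ) and has L² norm at most C times the L² norm of f. -/

import Mathlib

open MeasureTheory Set
open scoped ENNReal NNReal

noncomputable section

/-- The constant `c_H = (H(2H-1)/B(2-2H, H-1/2))^{1/2}`, where
`B(x,y) = Γ(x)Γ(y)/Γ(x+y)` is the Beta function. -/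
def cH (H : ℝ) : ℝ :=
  Real.sqrt (H * (2 * H - 1) /
    (Real.Gamma (2 - 2 * H) * Real.Gamma (H - 1 / 2) / Real.Gamma ((2 - 2 * H) + (H - 1 / 2))))

/-- The operator `K̇_H`:
`(K̇_H f)(t) = c_H t^{H-1/2} ∫_0^t (t-s)^{H-3/2} s^{1/2-H} f(s) ds`. -/
def Kdot (H : ℝ) {E : Type*} [NormedAddCommGroup E] [NormedSpace ℝ E]
    (f : ℝ → E) (t : ℝ) : E :=
  (cH H * t ^ (H - 1 / 2)) •
    ∫ s in Ioo (0 : ℝ) t, ((t - s) ^ (H - 3 / 2) * s ^ (1 / 2 - H)) • f s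

def BH (H : ℝ) : ℝ := 2 * (1 / (2 - 2 * H) + 1 / (H - 1 / 2))

lemma row_bound (H : ℝ) (h1 : 1 / 2 < H) (h2 : H < 1) {t : ℝ} (ht : 0 < t) :
    ∫⁻ s in Ioo (0 : ℝ) t, ENNReal.ofReal ((t - s) ^ (H - 3 / 2) * s ^ (1 - 2 * H)) ≤
      ENNReal.ofReal (BH H * t ^ (1 / 2 - H)) := by
  have h02 : 0 < t / 2 := by linarith
  have hsplit : Ioo (0 : ℝ) t = Ioc 0 (t / 2) ∪ Ioo (t / 2) t := by
    rw [Set.Ioc_union_Ioo_eq_Ioo (by linarith) (by linarith)]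
  have hdisj : Disjoint (Ioc (0 : ℝ) (t / 2)) (Ioo (t / 2) t) := by
    rw [Set.disjoint_left]
    rintro x ⟨_, hx2⟩ ⟨hx3, _⟩; linarith
  rw [hsplit, lintegral_union measurableSet_Ioo hdisj]
  -- part 1
  have part1 : ∫⁻ s in Ioc (0 : ℝ) (t / 2),
      ENNReal.ofReal ((t - s) ^ (H - 3 / 2) * s ^ (1 - 2 * H)) ≤
      ENNReal.ofReal ((t / 2) ^ (1 / 2 - H) * (1 / (2 - 2 * H))) := by
    have step1 : ∫⁻ s in Ioc (0 : ℝ) (t / 2),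
        ENNReal.ofReal ((t - s) ^ (H - 3 / 2) * s ^ (1 - 2 * H)) ≤
        ∫⁻ s in Ioc (0 : ℝ) (t / 2),
        ENNReal.ofReal ((t / 2) ^ (H - 3 / 2) * s ^ (1 - 2 * H)) := by
      refine lintegral_mono_ae ?_
      refine (ae_restrict_iff' measurableSet_Ioc).mpr (ae_of_all _ fun s hs => ?_)
      refine ENNReal.ofReal_le_ofReal ?_
      have hbase : (t - s) ^ (H - 3 / 2) ≤ (t / 2) ^ (H - 3 / 2) :=
        Real.rpow_le_rpow_of_nonpos h02 (by linarith [hs.2]) (by linarith)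
      exact mul_le_mul_of_nonneg_right hbase (Real.rpow_nonneg hs.1.le _)
    have step2 : ∫⁻ s in Ioc (0 : ℝ) (t / 2),
        ENNReal.ofReal ((t / 2) ^ (H - 3 / 2) * s ^ (1 - 2 * H)) =
        ENNReal.ofReal ((t / 2) ^ (H - 3 / 2) * ((t / 2) ^ (2 - 2 * H) / (2 - 2 * H))) := by
      have hint : IntegrableOn (fun s : ℝ => s ^ (1 - 2 * H)) (Ioc 0 (t / 2)) volume := by
        have := intervalIntegral.intervalIntegrable_rpow' (a := 0) (b := t / 2)
          (r := 1 - 2 * H) (by linarith)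
        rwa [intervalIntegrable_iff, Set.uIoc_of_le h02.le] at this
      have hval : ∫ s in Ioc (0 : ℝ) (t / 2), s ^ (1 - 2 * H) =
          (t / 2) ^ (2 - 2 * H) / (2 - 2 * H) := by
        rw [← intervalIntegral.integral_of_le h02.le]
        rw [integral_rpow (Or.inl (by linarith))]
        rw [Real.zero_rpow (by norm_num; linarith)]
        norm_num
        ring_nf
      calc ∫⁻ s in Ioc (0 : ℝ) (t / 2),
          ENNReal.ofReal ((t / 2) ^ (H - 3 / 2) * s ^ (1 - 2 * H))
          = ∫⁻ s in Ioc (0 : ℝ) (t / 2),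
            ENNReal.ofReal ((t / 2) ^ (H - 3 / 2)) * ENNReal.ofReal (s ^ (1 - 2 * H)) := by
            refine setLIntegral_congr_fun measurableSet_Ioc (fun s hs => ?_)
            rw [← ENNReal.ofReal_mul (Real.rpow_nonneg h02.le _)]
        _ = ENNReal.ofReal ((t / 2) ^ (H - 3 / 2)) *
            ∫⁻ s in Ioc (0 : ℝ) (t / 2), ENNReal.ofReal (s ^ (1 - 2 * H)) :=
            lintegral_const_mul' _ _ ENNReal.ofReal_ne_top
        _ = ENNReal.ofReal ((t / 2) ^ (H - 3 / 2)) *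
            ENNReal.ofReal ((t / 2) ^ (2 - 2 * H) / (2 - 2 * H)) := by
            rw [← ofReal_integral_eq_lintegral_ofReal hint
              ((ae_restrict_iff' measurableSet_Ioc).mpr
                (ae_of_all _ fun s hs => Real.rpow_nonneg hs.1.le _)), hval]
        _ = _ := by rw [← ENNReal.ofReal_mul (Real.rpow_nonneg h02.le _)]
    refine step1.trans (le_of_eq (step2.trans ?_))
    congr 1
    rw [div_eq_mul_one_div ((t / 2) ^ (2 - 2 * H)) (2 - 2 * H), ← mul_assoc,
      ← Real.rpow_add h02, show H - 3 / 2 + (2 - 2 * H) = 1 / 2 - H by ring]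
  have part2 : ∫⁻ s in Ioo (t / 2) t,
      ENNReal.ofReal ((t - s) ^ (H - 3 / 2) * s ^ (1 - 2 * H)) ≤
      ENNReal.ofReal ((t / 2) ^ (1 / 2 - H) * (1 / (H - 1 / 2))) := by
    have step1 : ∫⁻ s in Ioo (t / 2) t,
        ENNReal.ofReal ((t - s) ^ (H - 3 / 2) * s ^ (1 - 2 * H)) ≤
        ∫⁻ s in Ioo (t / 2) t,
        ENNReal.ofReal ((t - s) ^ (H - 3 / 2) * (t / 2) ^ (1 - 2 * H)) := by
      refine lintegral_mono_ae ?_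
      refine (ae_restrict_iff' measurableSet_Ioo).mpr (ae_of_all _ fun s hs => ?_)
      refine ENNReal.ofReal_le_ofReal ?_
      have hbase : s ^ (1 - 2 * H) ≤ (t / 2) ^ (1 - 2 * H) :=
        Real.rpow_le_rpow_of_nonpos h02 hs.1.le (by linarith)
      exact mul_le_mul_of_nonneg_left hbase (Real.rpow_nonneg (by linarith [hs.2, hs.1]) _)
    have hint : IntegrableOn (fun s : ℝ => (t - s) ^ (H - 3 / 2)) (Ioc (t / 2) t) volume := by
      have base := intervalIntegral.intervalIntegrable_rpow' (a := 0) (b := t / 2)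
        (r := H - 3 / 2) (by linarith)
      have comp := base.comp_sub_left t
      have : t - t / 2 = t / 2 := by ring
      rw [this, sub_zero] at comp
      rwa [intervalIntegrable_iff, Set.uIoc_comm, Set.uIoc_of_le (by linarith)] at comp
    have hval : ∫ s in Ioc (t / 2) t, (t - s) ^ (H - 3 / 2) =
        (t / 2) ^ (H - 1 / 2) / (H - 1 / 2) := by
      rw [← intervalIntegral.integral_of_le (by linarith)]
      rw [intervalIntegral.integral_comp_sub_left (fun u : ℝ => u ^ (H - 3 / 2)) t]
      rw [show t - t = 0 by ring, show t - t / 2 = t / 2 by ring]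
      rw [integral_rpow (Or.inl (by linarith))]
      rw [Real.zero_rpow (by norm_num; linarith)]
      rw [show H - 3 / 2 + 1 = H - 1 / 2 by ring]
      ring
    have step2 : ∫⁻ s in Ioo (t / 2) t,
        ENNReal.ofReal ((t - s) ^ (H - 3 / 2) * (t / 2) ^ (1 - 2 * H)) =
        ENNReal.ofReal ((t / 2) ^ (H - 1 / 2) / (H - 1 / 2) * (t / 2) ^ (1 - 2 * H)) := by
      rw [Measure.restrict_congr_set Ioo_ae_eq_Ioc]
      calc ∫⁻ s in Ioc (t / 2) t,
          ENNReal.ofReal ((t - s) ^ (H - 3 / 2) * (t / 2) ^ (1 - 2 * H))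
          = ∫⁻ s in Ioc (t / 2) t,
            ENNReal.ofReal ((t - s) ^ (H - 3 / 2)) * ENNReal.ofReal ((t / 2) ^ (1 - 2 * H)) := by
            refine setLIntegral_congr_fun measurableSet_Ioc (fun s hs => ?_)
            rw [← ENNReal.ofReal_mul (Real.rpow_nonneg (sub_nonneg.mpr hs.2) _)]
        _ = (∫⁻ s in Ioc (t / 2) t, ENNReal.ofReal ((t - s) ^ (H - 3 / 2))) *
            ENNReal.ofReal ((t / 2) ^ (1 - 2 * H)) :=
            lintegral_mul_const' _ _ ENNReal.ofReal_ne_top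
        _ = ENNReal.ofReal ((t / 2) ^ (H - 1 / 2) / (H - 1 / 2)) *
            ENNReal.ofReal ((t / 2) ^ (1 - 2 * H)) := by
            rw [← ofReal_integral_eq_lintegral_ofReal hint
              ((ae_restrict_iff' measurableSet_Ioc).mpr
                (ae_of_all _ fun s hs => Real.rpow_nonneg (sub_nonneg.mpr hs.2) _)), hval]
        _ = _ := by rw [← ENNReal.ofReal_mul
              (div_nonneg (Real.rpow_nonneg h02.le _) (by linarith))]
    refine step1.trans (le_of_eq (step2.trans ?_))
    congr 1
    rw [div_eq_mul_one_div ((t / 2) ^ (H - 1 / 2)) (H - 1 / 2), mul_right_comm,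
      ← Real.rpow_add h02, show H - 1 / 2 + (1 - 2 * H) = 1 / 2 - H by ring]
  refine (add_le_add part1 part2).trans ?_
  rw [← ENNReal.ofReal_add
    (mul_nonneg (Real.rpow_nonneg h02.le _) (one_div_nonneg.mpr (by linarith)))
    (mul_nonneg (Real.rpow_nonneg h02.le _) (one_div_nonneg.mpr (by linarith)))]
  refine ENNReal.ofReal_le_ofReal ?_
  have hhalf : (t / 2) ^ (1 / 2 - H) ≤ 2 * t ^ (1 / 2 - H) := by
    have h1' : (t / 2) ^ (1 / 2 - H) = t ^ (1 / 2 - H) * (2 : ℝ) ^ (H - 1 / 2) := by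
      rw [show t / 2 = t * 2⁻¹ by ring, Real.mul_rpow ht.le (by norm_num),
        Real.inv_rpow (by norm_num : (0:ℝ) ≤ 2), ← Real.rpow_neg (by norm_num : (0:ℝ) ≤ 2),
        show -(1 / 2 - H) = H - 1 / 2 by ring]
    have h2' : (2 : ℝ) ^ (H - 1 / 2) ≤ 2 :=
      calc (2 : ℝ) ^ (H - 1 / 2) ≤ (2 : ℝ) ^ (1 : ℝ) :=
            Real.rpow_le_rpow_of_exponent_le one_le_two (by linarith)
        _ = 2 := Real.rpow_one 2
    calc (t / 2) ^ (1 / 2 - H) = t ^ (1 / 2 - H) * (2 : ℝ) ^ (H - 1 / 2) := h1'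
      _ ≤ t ^ (1 / 2 - H) * 2 := mul_le_mul_of_nonneg_left h2' (Real.rpow_nonneg ht.le _)
      _ = 2 * t ^ (1 / 2 - H) := by ring
  have hA : (0:ℝ) ≤ 1 / (2 - 2 * H) := one_div_nonneg.mpr (by linarith)
  have hB : (0:ℝ) ≤ 1 / (H - 1 / 2) := one_div_nonneg.mpr (by linarith)
  have := mul_le_mul_of_nonneg_right hhalf (add_nonneg hA hB)
  unfold BH
  nlinarith [this]

lemma BH_pos (H : ℝ) (h1 : 1 / 2 < H) (h2 : H < 1) : 0 < BH H := by
  unfold BH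
  have : (0:ℝ) < 1 / (2 - 2 * H) := one_div_pos.mpr (by linarith)
  have : (0:ℝ) < 1 / (H - 1 / 2) := one_div_pos.mpr (by linarith)
  linarith

lemma cH_nonneg (H : ℝ) : 0 ≤ cH H := Real.sqrt_nonneg _

lemma col_bound (H : ℝ) (h1 : 1 / 2 < H) {s : ℝ} (hs0 : 0 < s) (hs1 : s < 1) :
    ∫⁻ t in Ioc s 1, ENNReal.ofReal ((t - s) ^ (H - 3 / 2)) ≤
      ENNReal.ofReal (1 / (H - 1 / 2)) := by
  have hint : IntegrableOn (fun t : ℝ => (t - s) ^ (H - 3 / 2)) (Ioc s 1) volume := by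
    have base := intervalIntegral.intervalIntegrable_rpow' (a := 0) (b := 1 - s)
      (r := H - 3 / 2) (by linarith)
    have comp := base.comp_sub_right s
    rw [zero_add, sub_add_cancel] at comp
    rwa [intervalIntegrable_iff, Set.uIoc_of_le (by linarith)] at comp
  have hval : ∫ t in Ioc s 1, (t - s) ^ (H - 3 / 2) =
      (1 - s) ^ (H - 1 / 2) / (H - 1 / 2) := by
    rw [← intervalIntegral.integral_of_le hs1.le]
    rw [intervalIntegral.integral_comp_sub_right (fun u : ℝ => u ^ (H - 3 / 2)) s]
    rw [sub_self]
    rw [integral_rpow (Or.inl (by linarith))]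
    rw [Real.zero_rpow (by norm_num; linarith)]
    rw [show H - 3 / 2 + 1 = H - 1 / 2 by ring]
    ring
  rw [← ofReal_integral_eq_lintegral_ofReal hint
    ((ae_restrict_iff' measurableSet_Ioc).mpr
      (ae_of_all _ fun t ht => Real.rpow_nonneg (sub_nonneg.mpr ht.1.le) _)), hval]
  refine ENNReal.ofReal_le_ofReal ?_
  have hpos : (0:ℝ) < H - 1 / 2 := by linarith
  have hle : (1 - s) ^ (H - 1 / 2) ≤ 1 :=
    Real.rpow_le_one (by linarith) (by linarith) (by linarith)
  exact (div_le_div_iff_of_pos_right hpos).mpr hle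

lemma pointwise_bound (H : ℝ) (h1 : 1 / 2 < H) (h2 : H < 1)
    {E : Type*} [NormedAddCommGroup E] [NormedSpace ℝ E]
    (φ : ℝ → E) (hφ : StronglyMeasurable φ) {t : ℝ} (ht : 0 < t) (ht1 : t ≤ 1) :
    (‖Kdot H φ t‖₊ : ℝ≥0∞) ^ (2:ℝ) ≤
      ENNReal.ofReal (cH H ^ 2 * BH H) *
        ∫⁻ s in Ioo (0:ℝ) t,
          ENNReal.ofReal ((t - s) ^ (H - 3 / 2)) * (‖φ s‖₊ : ℝ≥0∞) ^ (2:ℝ) := by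
  set F : ℝ → ℝ≥0∞ :=
    fun s => ENNReal.ofReal ((t - s) ^ ((H - 3 / 2) / 2) * s ^ (1 / 2 - H)) with hF
  set G : ℝ → ℝ≥0∞ :=
    fun s => ENNReal.ofReal ((t - s) ^ ((H - 3 / 2) / 2)) * (‖φ s‖₊ : ℝ≥0∞) with hG
  have hFm : Measurable F :=
    (((measurable_const.sub measurable_id).pow measurable_const).mul
      (measurable_id.pow measurable_const)).ennreal_ofReal
  have hGm : Measurable G :=
    (((measurable_const.sub measurable_id).pow measurable_const).ennreal_ofReal).mul hφ.enorm
  -- Step 0 : norm of the integral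
  have hker : (‖Kdot H φ t‖₊ : ℝ≥0∞) ≤ ENNReal.ofReal (cH H * t ^ (H - 1 / 2)) *
      ∫⁻ s in Ioo (0:ℝ) t,
        (‖((t - s) ^ (H - 3 / 2) * s ^ (1 / 2 - H)) • φ s‖₊ : ℝ≥0∞) := by
    rw [Kdot, nnnorm_smul, ENNReal.coe_mul,
      (show ((‖cH H * t ^ (H - 1 / 2)‖₊ : ℝ≥0∞)) = _ from
        Real.enorm_eq_ofReal (mul_nonneg (cH_nonneg H) (Real.rpow_nonneg ht.le _)))]
    exact mul_le_mul_right (enorm_integral_le_lintegral_enorm _) _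
  -- Step 1 : rewrite the integrand as a product
  have hprod : ∫⁻ s in Ioo (0:ℝ) t,
      (‖((t - s) ^ (H - 3 / 2) * s ^ (1 / 2 - H)) • φ s‖₊ : ℝ≥0∞) =
      ∫⁻ s in Ioo (0:ℝ) t, F s * G s := by
    refine setLIntegral_congr_fun measurableSet_Ioo (fun s hs => ?_)
    have hts : 0 < t - s := sub_pos.mpr hs.2
    have hs0 : 0 < s := hs.1
    have hsq : (t - s) ^ ((H - 3 / 2) / 2) * (t - s) ^ ((H - 3 / 2) / 2)
        = (t - s) ^ (H - 3 / 2) := by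
      rw [← Real.rpow_add hts, show (H - 3 / 2) / 2 + (H - 3 / 2) / 2 = H - 3 / 2 by ring]
    rw [nnnorm_smul, ENNReal.coe_mul,
      (show ((‖(t - s) ^ (H - 3 / 2) * s ^ (1 / 2 - H)‖₊ : ℝ≥0∞)) = _ from Real.enorm_eq_ofReal
        (mul_nonneg (Real.rpow_nonneg hts.le _) (Real.rpow_nonneg hs0.le _))),
      show (t - s) ^ (H - 3 / 2) * s ^ (1 / 2 - H) =
        ((t - s) ^ ((H - 3 / 2) / 2) * s ^ (1 / 2 - H)) * (t - s) ^ ((H - 3 / 2) / 2) from by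
          rw [← hsq]; ring,
      ENNReal.ofReal_mul (mul_nonneg (Real.rpow_nonneg hts.le _) (Real.rpow_nonneg hs0.le _))]
    rw [hF, hG]
    ring
  -- Step 2 : Cauchy-Schwarz
  have hconj : Real.HolderConjugate 2 2 := (Real.holderConjugate_iff (p := 2) (q := 2)).mpr ⟨one_lt_two, by norm_num⟩
  have hCS : ∫⁻ s in Ioo (0:ℝ) t, F s * G s ≤
      (∫⁻ s in Ioo (0:ℝ) t, F s ^ (2:ℝ)) ^ (1/2 : ℝ) *
      (∫⁻ s in Ioo (0:ℝ) t, G s ^ (2:ℝ)) ^ (1/2 : ℝ) := by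
    simpa using ENNReal.lintegral_mul_le_Lp_mul_Lq (volume.restrict (Ioo (0:ℝ) t)) hconj
      hFm.aemeasurable hGm.aemeasurable
  -- Step 3 : bound on ∫ F²
  have hF2 : ∫⁻ s in Ioo (0:ℝ) t, F s ^ (2:ℝ) ≤
      ENNReal.ofReal (BH H * t ^ (1 / 2 - H)) := by
    have heq : ∀ᵐ s ∂volume, s ∈ Ioo (0:ℝ) t → F s ^ (2:ℝ) =
        ENNReal.ofReal ((t - s) ^ (H - 3 / 2) * s ^ (1 - 2 * H)) := by
      refine ae_of_all _ fun s hs => ?_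
      have hts : 0 < t - s := sub_pos.mpr hs.2
      rw [hF]
      rw [ENNReal.ofReal_rpow_of_nonneg
        (mul_nonneg (Real.rpow_nonneg hts.le _) (Real.rpow_nonneg hs.1.le _)) (by norm_num)]
      congr 1
      rw [Real.mul_rpow (Real.rpow_nonneg hts.le _) (Real.rpow_nonneg hs.1.le _),
        ← Real.rpow_mul hts.le, ← Real.rpow_mul hs.1.le,
        show (H - 3 / 2) / 2 * 2 = H - 3 / 2 by ring,
        show (1 / 2 - H) * 2 = 1 - 2 * H by ring]
    rw [setLIntegral_congr_fun_ae measurableSet_Ioo heq]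
    exact row_bound H h1 h2 ht
  -- Step 4 : ∫ G²
  have hG2 : ∫⁻ s in Ioo (0:ℝ) t, G s ^ (2:ℝ) =
      ∫⁻ s in Ioo (0:ℝ) t,
        ENNReal.ofReal ((t - s) ^ (H - 3 / 2)) * (‖φ s‖₊ : ℝ≥0∞) ^ (2:ℝ) := by
    refine setLIntegral_congr_fun measurableSet_Ioo (fun s hs => ?_)
    have hts : 0 < t - s := sub_pos.mpr hs.2
    rw [hG, ENNReal.mul_rpow_of_nonneg _ _ (by norm_num : (0:ℝ) ≤ 2),
      ENNReal.ofReal_rpow_of_nonneg (Real.rpow_nonneg hts.le _) (by norm_num),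
      ← Real.rpow_mul hts.le, show (H - 3 / 2) / 2 * 2 = H - 3 / 2 by ring]
  -- assemble
  set S : ℝ≥0∞ := ∫⁻ s in Ioo (0:ℝ) t,
      ENNReal.ofReal ((t - s) ^ (H - 3 / 2)) * (‖φ s‖₊ : ℝ≥0∞) ^ (2:ℝ) with hS
  have hX : (‖Kdot H φ t‖₊ : ℝ≥0∞) ≤ ENNReal.ofReal (cH H * t ^ (H - 1 / 2)) *
      ((∫⁻ s in Ioo (0:ℝ) t, F s ^ (2:ℝ)) ^ (1/2 : ℝ) * S ^ (1/2 : ℝ)) := by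
    rw [← hG2]
    exact hker.trans (by rw [hprod]; exact mul_le_mul_right hCS _)
  have hsqle := ENNReal.rpow_le_rpow hX (by norm_num : (0:ℝ) ≤ 2)
  refine hsqle.trans ?_
  rw [ENNReal.mul_rpow_of_nonneg _ _ (by norm_num : (0:ℝ) ≤ 2),
    ENNReal.mul_rpow_of_nonneg _ _ (by norm_num : (0:ℝ) ≤ 2),
    ← ENNReal.rpow_mul, ← ENNReal.rpow_mul,
    show (1/2 : ℝ) * 2 = 1 by norm_num, ENNReal.rpow_one, ENNReal.rpow_one]
  calc ENNReal.ofReal (cH H * t ^ (H - 1 / 2)) ^ (2:ℝ) *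
        ((∫⁻ s in Ioo (0:ℝ) t, F s ^ (2:ℝ)) * S)
      = ENNReal.ofReal (cH H * t ^ (H - 1 / 2)) ^ (2:ℝ) *
        (∫⁻ s in Ioo (0:ℝ) t, F s ^ (2:ℝ)) * S := by rw [mul_assoc]
    _ ≤ ENNReal.ofReal (cH H * t ^ (H - 1 / 2)) ^ (2:ℝ) *
        ENNReal.ofReal (BH H * t ^ (1 / 2 - H)) * S :=
        mul_le_mul_left (mul_le_mul_right hF2 _) _
    _ ≤ ENNReal.ofReal (cH H ^ 2 * BH H) * S := by
        refine mul_le_mul_left ?_ _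
        rw [ENNReal.ofReal_rpow_of_nonneg
          (mul_nonneg (cH_nonneg H) (Real.rpow_nonneg ht.le _)) (by norm_num),
          ← ENNReal.ofReal_mul
            (Real.rpow_nonneg (mul_nonneg (cH_nonneg H) (Real.rpow_nonneg ht.le _)) _)]
        refine ENNReal.ofReal_le_ofReal ?_
        have hrw : (cH H * t ^ (H - 1 / 2)) ^ (2:ℝ) = (cH H * t ^ (H - 1 / 2)) ^ (2:ℕ) := by
          rw [show (2:ℝ) = ((2:ℕ):ℝ) by norm_num, Real.rpow_natCast]
        rw [hrw]
        have ht3 : t ^ (H - 1 / 2) * t ^ (H - 1 / 2) * t ^ (1 / 2 - H) = t ^ (H - 1 / 2) := by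
          rw [← Real.rpow_add ht, ← Real.rpow_add ht,
            show H - 1 / 2 + (H - 1 / 2) + (1 / 2 - H) = H - 1 / 2 by ring]
        have hle1 : t ^ (H - 1 / 2) ≤ 1 := Real.rpow_le_one ht.le ht1 (by linarith)
        calc (cH H * t ^ (H - 1 / 2)) ^ (2:ℕ) * (BH H * t ^ (1 / 2 - H))
            = cH H ^ 2 * BH H * (t ^ (H - 1 / 2) * t ^ (H - 1 / 2) * t ^ (1 / 2 - H)) := by
              ring
          _ = cH H ^ 2 * BH H * t ^ (H - 1 / 2) := by rw [ht3]
          _ ≤ cH H ^ 2 * BH H * 1 := by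
              refine mul_le_mul_of_nonneg_left hle1 ?_
              exact mul_nonneg (sq_nonneg _) (BH_pos H h1 h2).le
          _ = cH H ^ 2 * BH H := mul_one _

lemma global_bound (H : ℝ) (h1 : 1 / 2 < H) (h2 : H < 1)
    {E : Type*} [NormedAddCommGroup E] [NormedSpace ℝ E]
    (φ : ℝ → E) (hφ : StronglyMeasurable φ) :
    ∫⁻ t in Icc (0:ℝ) 1, (‖Kdot H φ t‖₊ : ℝ≥0∞) ^ (2:ℝ) ≤
      ENNReal.ofReal (cH H ^ 2 * BH H * (1 / (H - 1 / 2))) *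
        ∫⁻ s in Icc (0:ℝ) 1, (‖φ s‖₊ : ℝ≥0∞) ^ (2:ℝ) := by
  have hIoc : volume.restrict (Icc (0:ℝ) 1) = volume.restrict (Ioc (0:ℝ) 1) :=
    (Measure.restrict_congr_set Ioc_ae_eq_Icc).symm
  rw [hIoc]
  set g2 : ℝ → ℝ≥0∞ := fun s => (‖φ s‖₊ : ℝ≥0∞) ^ (2:ℝ) with hg2
  have hg2m : Measurable g2 := hφ.enorm.pow measurable_const
  set A : Set (ℝ × ℝ) := {q | 0 < q.2 ∧ q.2 < q.1} with hA
  have hAmeas : MeasurableSet A :=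
    (measurableSet_lt measurable_const measurable_snd).inter
      (measurableSet_lt measurable_snd measurable_fst)
  set Φ : ℝ × ℝ → ℝ≥0∞ :=
    fun q => ENNReal.ofReal ((q.1 - q.2) ^ (H - 3 / 2)) * g2 q.2 with hΦ
  have hΦmeas : Measurable Φ :=
    (((measurable_fst.sub measurable_snd).pow measurable_const).ennreal_ofReal).mul
      (hg2m.comp measurable_snd)
  set F : ℝ → ℝ → ℝ≥0∞ := fun t s => A.indicator Φ (t, s) with hFdef
  have hFmeas : Measurable (Function.uncurry F) := by
    have : Function.uncurry F = A.indicator Φ := rfl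
    rw [this]
    exact hΦmeas.indicator hAmeas
  have hinner : ∀ t : ℝ, ∫⁻ s in Ioo (0:ℝ) t,
      ENNReal.ofReal ((t - s) ^ (H - 3 / 2)) * g2 s = ∫⁻ s, F t s := by
    intro t
    rw [← lintegral_indicator measurableSet_Ioo]
    refine lintegral_congr fun s => ?_
    simp only [hFdef, hA, hΦ, Set.indicator_apply, Set.mem_Ioo, Set.mem_setOf_eq]
  -- step 1 : pointwise bound
  have step1 : ∫⁻ t in Ioc (0:ℝ) 1, (‖Kdot H φ t‖₊ : ℝ≥0∞) ^ (2:ℝ) ≤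
      ENNReal.ofReal (cH H ^ 2 * BH H) * ∫⁻ t in Ioc (0:ℝ) 1, ∫⁻ s, F t s := by
    rw [← lintegral_const_mul' _ _ ENNReal.ofReal_ne_top]
    refine lintegral_mono_ae ((ae_restrict_iff' measurableSet_Ioc).mpr
      (ae_of_all _ fun t ht => ?_))
    rw [← hinner t]
    exact pointwise_bound H h1 h2 φ hφ ht.1 ht.2
  -- step 2 : Tonelli
  have step2 : ∫⁻ t in Ioc (0:ℝ) 1, ∫⁻ s, F t s =
      ∫⁻ s, ∫⁻ t in Ioc (0:ℝ) 1, F t s := lintegral_lintegral_swap hFmeas.aemeasurable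
  -- step 3 : column bound
  have step3 : ∀ s : ℝ, ∫⁻ t in Ioc (0:ℝ) 1, F t s ≤
      (Ioo (0:ℝ) 1).indicator (fun s => ENNReal.ofReal (1 / (H - 1 / 2)) * g2 s) s := by
    intro s
    by_cases hs : s ∈ Ioo (0:ℝ) 1
    · rw [Set.indicator_of_mem hs]
      have hptw : ∫⁻ t in Ioc (0:ℝ) 1, F t s ≤
          ∫⁻ t in Ioc (0:ℝ) 1,
            (Ioc s 1).indicator (fun t => ENNReal.ofReal ((t - s) ^ (H - 3 / 2)) * g2 s) t := by
        refine lintegral_mono_ae ((ae_restrict_iff' measurableSet_Ioc).mpr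
          (ae_of_all _ fun t ht => ?_))
        by_cases hts : (t, s) ∈ A
        · have e1 : F t s = Φ (t, s) := Set.indicator_of_mem hts _
          rw [e1, Set.indicator_of_mem (show t ∈ Ioc s 1 from ⟨hts.2, ht.2⟩)]
        · have e1 : F t s = 0 := Set.indicator_of_notMem hts _
          rw [e1]
          exact zero_le
      refine hptw.trans ?_
      rw [lintegral_indicator measurableSet_Ioc, Measure.restrict_restrict measurableSet_Ioc]
      have hsub : ∫⁻ t in Ioc s 1 ∩ Ioc (0:ℝ) 1,
          ENNReal.ofReal ((t - s) ^ (H - 3 / 2)) * g2 s ≤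
          ∫⁻ t in Ioc s 1, ENNReal.ofReal ((t - s) ^ (H - 3 / 2)) * g2 s :=
        lintegral_mono_set inter_subset_left
      refine hsub.trans ?_
      rw [lintegral_mul_const' _ _ (ENNReal.rpow_ne_top_of_nonneg (by norm_num) ENNReal.coe_ne_top)]
      exact mul_le_mul_left (col_bound H h1 hs.1 hs.2) _
    · rw [Set.indicator_of_notMem hs]
      have : ∀ᵐ t ∂(volume.restrict (Ioc (0:ℝ) 1)), F t s = 0 := by
        refine (ae_restrict_iff' measurableSet_Ioc).mpr (ae_of_all _ fun t ht => ?_)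
        refine Set.indicator_of_notMem ?_ _
        intro hmem
        exact hs (mem_Ioo.mpr ⟨hmem.1, lt_of_lt_of_le hmem.2 ht.2⟩)
      rw [lintegral_congr_ae this, lintegral_zero]
  -- step 4 : integrate the column bound
  have step4 : ∫⁻ s, ∫⁻ t in Ioc (0:ℝ) 1, F t s ≤
      ENNReal.ofReal (1 / (H - 1 / 2)) * ∫⁻ s in Ioc (0:ℝ) 1, g2 s := by
    refine (lintegral_mono step3).trans ?_
    rw [lintegral_indicator measurableSet_Ioo,
      lintegral_const_mul' _ _ ENNReal.ofReal_ne_top]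
    exact mul_le_mul_right (lintegral_mono_set Ioo_subset_Ioc_self) _
  refine step1.trans ?_
  rw [step2]
  refine (mul_le_mul_right step4 _).trans ?_
  rw [← mul_assoc, ← ENNReal.ofReal_mul
    (mul_nonneg (sq_nonneg _) (BH_pos H h1 h2).le)]

lemma kdot_meas (H : ℝ) {E : Type*} [NormedAddCommGroup E] [NormedSpace ℝ E]
    (φ : ℝ → E) (hφ : StronglyMeasurable φ) :
    AEStronglyMeasurable (Kdot H φ) (volume.restrict (Icc (0:ℝ) 1)) := by
  set A : Set (ℝ × ℝ) := {q | 0 < q.2 ∧ q.2 < q.1} with hA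
  have hAmeas : MeasurableSet A :=
    (measurableSet_lt measurable_const measurable_snd).inter
      (measurableSet_lt measurable_snd measurable_fst)
  set P : ℝ × ℝ → E := fun q =>
    A.indicator (fun q => ((q.1 - q.2) ^ (H - 3 / 2) * q.2 ^ (1 / 2 - H)) • φ q.2) q with hP
  have hPm : StronglyMeasurable P := by
    refine StronglyMeasurable.indicator ?_ hAmeas
    exact ((((measurable_fst.sub measurable_snd).pow measurable_const).mul
      (measurable_snd.pow measurable_const)).stronglyMeasurable).smul
      (hφ.comp_measurable measurable_snd)
  have hint : AEStronglyMeasurable (fun t => ∫ s, P (t, s))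
      (volume.restrict (Icc (0:ℝ) 1)) :=
    hPm.aestronglyMeasurable.integral_prod_right'
  have heq : Kdot H φ = fun t => (cH H * t ^ (H - 1 / 2)) • ∫ s, P (t, s) := by
    funext t
    rw [Kdot]
    congr 1
    rw [← integral_indicator measurableSet_Ioo]
    refine integral_congr_ae (ae_of_all _ fun s => ?_)
    simp only [hP, hA, Set.indicator_apply, Set.mem_Ioo, Set.mem_setOf_eq]
  rw [heq]
  exact ((measurable_const.mul
    (measurable_id.pow measurable_const)).aestronglyMeasurable).smul hint

/-- For every `H ∈ (1/2,1)` and `n ≥ 1`, the operator `K̇_H` is a bounded operator on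
`L²([0,1];ℝⁿ)`. -/
theorem kdot_bounded_on_L2 (H : ℝ) (hH : H ∈ Ioo (1 / 2 : ℝ) 1) (n : ℕ) (hn : 1 ≤ n) :
    ∃ C : ℝ, 0 < C ∧ ∀ f : ℝ → EuclideanSpace ℝ (Fin n),
      MemLp f 2 (volume.restrict (Icc (0 : ℝ) 1)) →
        MemLp (Kdot H f) 2 (volume.restrict (Icc (0 : ℝ) 1)) ∧
        eLpNorm (Kdot H f) 2 (volume.restrict (Icc (0 : ℝ) 1)) ≤
          ENNReal.ofReal C * eLpNorm f 2 (volume.restrict (Icc (0 : ℝ) 1)) := by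
  obtain ⟨h1, h2⟩ := hH
  set D : ℝ := cH H ^ 2 * BH H * (1 / (H - 1 / 2)) with hD
  have hD0 : 0 ≤ D :=
    mul_nonneg (mul_nonneg (sq_nonneg _) (BH_pos H h1 h2).le)
      (one_div_nonneg.mpr (by linarith))
  set C : ℝ := max 1 (Real.sqrt D) with hC
  have hC0 : (0:ℝ) ≤ C := le_trans zero_le_one (le_max_left _ _)
  have hDC : D ≤ C ^ 2 := by
    have hs : Real.sqrt D ≤ C := le_max_right _ _
    calc D = Real.sqrt D ^ 2 := (Real.sq_sqrt hD0).symm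
      _ ≤ C ^ 2 := by nlinarith [Real.sqrt_nonneg D]
  refine ⟨C, lt_of_lt_of_le one_pos (le_max_left _ _), fun f hf => ?_⟩
  obtain ⟨hfm, hfnorm⟩ := hf
  set φ : ℝ → EuclideanSpace ℝ (Fin n) := hfm.mk f with hφ
  have hφm : StronglyMeasurable φ := hfm.stronglyMeasurable_mk
  have hfψ : f =ᵐ[volume.restrict (Icc (0:ℝ) 1)] φ := hfm.ae_eq_mk
  have hKeq : Kdot H f =ᵐ[volume.restrict (Icc (0:ℝ) 1)] Kdot H φ := by
    refine (ae_restrict_iff' measurableSet_Icc).mpr (ae_of_all _ fun t ht => ?_)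
    rw [Kdot, Kdot]
    congr 1
    refine integral_congr_ae ?_
    have hsub : Ioo (0:ℝ) t ⊆ Icc (0:ℝ) 1 := fun x hx => ⟨hx.1.le, hx.2.le.trans ht.2⟩
    exact (ae_restrict_of_ae_restrict_of_subset hsub hfψ).mono fun x hx => by dsimp only; rw [hx]
  have hmeas : AEStronglyMeasurable (Kdot H f) (volume.restrict (Icc (0:ℝ) 1)) :=
    (kdot_meas H φ hφm).congr hKeq.symm
  have h2toReal : ((2:ℝ≥0∞)).toReal = 2 := by norm_num
  have hsnormf : eLpNorm f 2 (volume.restrict (Icc (0:ℝ) 1)) =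
      (∫⁻ s in Icc (0:ℝ) 1, (‖φ s‖₊ : ℝ≥0∞) ^ (2:ℝ)) ^ (1/2 : ℝ) := by
    rw [eLpNorm_congr_ae hfψ,
      eLpNorm_eq_lintegral_rpow_enorm_toReal two_ne_zero ENNReal.ofNat_ne_top, h2toReal]
    rfl
  have hsnormK : eLpNorm (Kdot H f) 2 (volume.restrict (Icc (0:ℝ) 1)) =
      (∫⁻ t in Icc (0:ℝ) 1, (‖Kdot H φ t‖₊ : ℝ≥0∞) ^ (2:ℝ)) ^ (1/2 : ℝ) := by
    rw [eLpNorm_congr_ae hKeq,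
      eLpNorm_eq_lintegral_rpow_enorm_toReal two_ne_zero ENNReal.ofNat_ne_top, h2toReal]
    rfl
  have key : eLpNorm (Kdot H f) 2 (volume.restrict (Icc (0:ℝ) 1)) ≤
      ENNReal.ofReal C * eLpNorm f 2 (volume.restrict (Icc (0:ℝ) 1)) := by
    rw [hsnormK, hsnormf]
    calc (∫⁻ t in Icc (0:ℝ) 1, (‖Kdot H φ t‖₊ : ℝ≥0∞) ^ (2:ℝ)) ^ (1/2 : ℝ)
        ≤ (ENNReal.ofReal D *
            ∫⁻ s in Icc (0:ℝ) 1, (‖φ s‖₊ : ℝ≥0∞) ^ (2:ℝ)) ^ (1/2 : ℝ) :=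
          ENNReal.rpow_le_rpow (global_bound H h1 h2 φ hφm) (by norm_num)
      _ = (ENNReal.ofReal D) ^ (1/2 : ℝ) *
            (∫⁻ s in Icc (0:ℝ) 1, (‖φ s‖₊ : ℝ≥0∞) ^ (2:ℝ)) ^ (1/2 : ℝ) :=
          ENNReal.mul_rpow_of_nonneg _ _ (by norm_num)
      _ ≤ ENNReal.ofReal C *
            (∫⁻ s in Icc (0:ℝ) 1, (‖φ s‖₊ : ℝ≥0∞) ^ (2:ℝ)) ^ (1/2 : ℝ) := by
          refine mul_le_mul_left ?_ _
          calc (ENNReal.ofReal D) ^ (1/2 : ℝ)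
              ≤ (ENNReal.ofReal (C ^ 2)) ^ (1/2 : ℝ) :=
                ENNReal.rpow_le_rpow (ENNReal.ofReal_le_ofReal hDC) (by norm_num)
            _ = ENNReal.ofReal C := by
                rw [ENNReal.ofReal_pow hC0, ← ENNReal.rpow_natCast (ENNReal.ofReal C) 2,
                  ← ENNReal.rpow_mul]
                norm_num
  refine ⟨⟨hmeas, lt_of_le_of_lt key ?_⟩, key⟩
  exact ENNReal.mul_lt_top ENNReal.ofReal_lt_top hfnorm

end
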